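/- Let (X,d) be a compact metric space and f: X → X continuous. For any nonempty closed internally chain transitive set A ⊆ X and any ε > 0, there exists a two-sided sequence ⟨a_i⟩_{i∈ℤ} contained in A such that d(f(a_i), a_{i+1}) < ε for all i ∈ ℤ, d(f(a_i), a_{i+1}) → 0 as i → ±∞, and both the α-limit set and the ω-limit set of ⟨a_i⟩ equal A. -/

import Mathlib

open Filter Metric Topology Set

def omegaSeq {X : Type*} [MetricSpace X] (u : ℕ → X) : Set X :=
  ⋂ M : ℕ, closure (u '' Set.Ioi M)

def omegaPt {X : Type*} [MetricSpace X] (f : X → X) (x : X) : Set X :=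
  omegaSeq (fun n => f^[n] x)

def omegaZ {X : Type*} [MetricSpace X] (u : ℤ → X) : Set X :=
  ⋂ M : ℕ, closure (u '' {n : ℤ | (M : ℤ) < n})

def alphaZ {X : Type*} [MetricSpace X] (u : ℤ → X) : Set X :=
  ⋂ M : ℕ, closure (u '' {n : ℤ | n < -(M : ℤ)})

/-- `A` is internally chain transitive for `f`. -/
def chainTransitive {X : Type*} [MetricSpace X] (f : X → X) (A : Set X) : Prop :=
  ∀ a ∈ A, ∀ b ∈ A, ∀ δ > (0:ℝ), ∃ N : ℕ, 1 ≤ N ∧ ∃ y : ℕ → X,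
    y 0 = a ∧ y N = b ∧ (∀ i ≤ N, y i ∈ A) ∧ ∀ i < N, dist (f (y i)) (y (i+1)) < δ

/-- `u` is a full trajectory of `f`. -/
def fullTraj {X : Type*} (f : X → X) (u : ℤ → X) : Prop := ∀ i : ℤ, f (u i) = u (i + 1)

/-- `u` is a two-sided asymptotic pseudo-orbit of `f`. -/
def twoSidedAsymptotic {X : Type*} [MetricSpace X] (f : X → X) (u : ℤ → X) : Prop :=
  Filter.Tendsto (fun i : ℤ => dist (f (u i)) (u (i + 1))) Filter.atTop (nhds 0) ∧
  Filter.Tendsto (fun i : ℤ => dist (f (u i)) (u (i + 1))) Filter.atBot (nhds 0)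

/-- The γ-limit set of a point. -/
def gammaLimit {X : Type*} [MetricSpace X] (f : X → X) (x : X) : Set X :=
  {y | y ∈ omegaPt f x ∧ ∃ (ys : ℕ → X) (ns : ℕ → ℕ), StrictMono ns ∧
    (∀ i, f^[ns i] (ys i) = x) ∧ Filter.Tendsto ys Filter.atTop (nhds y)}

/-- State machine concatenating chains of lengths `N k`. -/
def chainSt (N : ℕ → ℕ) : ℕ → ℕ × ℕ
  | 0 => (0, 0)
  | n+1 =>
    if (chainSt N n).2 + 1 < N (chainSt N n).1 then ((chainSt N n).1, (chainSt N n).2 + 1)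
    else ((chainSt N n).1 + 1, 0)

/-- Partial sums of chain lengths. -/
def chainS (N : ℕ → ℕ) : ℕ → ℕ
  | 0 => 0
  | k+1 => chainS N k + N k

lemma chainSt_snd_lt (N : ℕ → ℕ) (hN : ∀ k, 1 ≤ N k) : ∀ n, (chainSt N n).2 < N (chainSt N n).1 := by
  intro n
  induction n with
  | zero => simpa [chainSt] using Nat.lt_of_lt_of_le Nat.zero_lt_one (hN 0)
  | succ n ih =>
    simp only [chainSt]
    split
    · next h => simpa using h
    · simpa using Nat.lt_of_lt_of_le Nat.zero_lt_one (hN _)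

lemma chainSt_fst_mono (N : ℕ → ℕ) : Monotone (fun n => (chainSt N n).1) := by
  apply monotone_nat_of_le_succ
  intro n
  simp only [chainSt]
  split <;> simp

lemma chainS_ge (N : ℕ → ℕ) (hN : ∀ k, 1 ≤ N k) : ∀ k, k ≤ chainS N k := by
  intro k
  induction k with
  | zero => simp [chainS]
  | succ k ih => have := hN k; simp only [chainS]; omega

lemma chainSt_chainS (N : ℕ → ℕ) (hN : ∀ k, 1 ≤ N k) :
    ∀ k, chainSt N (chainS N k) = (k, 0) := by
  intro k
  induction k with
  | zero => rfl
  | succ k ih =>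
    have hstep : ∀ j, j < N k → chainSt N (chainS N k + j) = (k, j) := by
      intro j hj
      induction j with
      | zero => simpa using ih
      | succ j ihj =>
        have hj' : j < N k := Nat.lt_of_succ_lt hj
        have h1 := ihj hj'
        show chainSt N ((chainS N k + j) + 1) = (k, j + 1)
        simp [chainSt, h1, hj]
    have h1 : chainSt N (chainS N k + (N k - 1)) = (k, N k - 1) :=
      hstep _ (Nat.sub_lt (hN k) one_pos)
    have hc : ¬ ((N k - 1) + 1 < N k) := by have := hN k; omega
    have h2 : chainS N (k+1) = (chainS N k + (N k - 1)) + 1 := by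
      have := hN k; simp only [chainS]; omega
    rw [h2]
    simp [chainSt, h1, hc]

lemma chainSt_step_val {X : Type*} (c : ℕ → ℕ → X) (N : ℕ → ℕ) (hN : ∀ k, 1 ≤ N k)
    (hlink : ∀ k, c k (N k) = c (k+1) 0) (n : ℕ) :
    c (chainSt N (n+1)).1 (chainSt N (n+1)).2 = c (chainSt N n).1 ((chainSt N n).2 + 1) := by
  have hlt := chainSt_snd_lt N hN n
  simp only [chainSt]
  split
  · rfl
  · next h =>
    have heq : (chainSt N n).2 + 1 = N (chainSt N n).1 := by omega
    simp only []
    rw [heq]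
    exact (hlink _).symm

theorem stmt7 {X : Type*} [MetricSpace X] [CompactSpace X] (f : X → X)
    (hf : Continuous f) (A : Set X) (hA : A.Nonempty) (hAc : IsClosed A)
    (hAi : chainTransitive f A) (ε : ℝ) (hε : 0 < ε) :
    ∃ a : ℤ → X, (∀ i, a i ∈ A) ∧ (∀ i, dist (f (a i)) (a (i + 1)) < ε) ∧
      twoSidedAsymptotic f a ∧ alphaZ a = A ∧ omegaZ a = A := by
  classical
  haveI : CompactSpace ↥A := isCompact_iff_compactSpace.mp hAc.isCompact
  haveI : Nonempty ↥A := hA.to_subtype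
  set dd : ℕ → X := fun n => (TopologicalSpace.denseSeq ↥A n : X) with hdd
  have hddA : ∀ n, dd n ∈ A := fun n => (TopologicalSpace.denseSeq ↥A n).2
  have hdense : ∀ p ∈ A, p ∈ closure (Set.range dd) := by
    intro p hp
    have h1 : (⟨p, hp⟩ : ↥A) ∈ closure (Set.range (TopologicalSpace.denseSeq ↥A)) :=
      TopologicalSpace.denseRange_denseSeq ↥A ⟨p, hp⟩
    have h2 := closure_subtype.mp h1
    rw [← Set.range_comp] at h2
    exact h2
  set x : ℕ → X := fun k => dd (Nat.unpair k).1 with hx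
  have hxA : ∀ k, x k ∈ A := fun k => hddA _
  set δ : ℕ → ℝ := fun k => min ε (1/(k+1)) with hδ
  have hδpos : ∀ k, 0 < δ k := fun k => lt_min hε (by positivity)
  have hδε : ∀ k, δ k ≤ ε := fun k => min_le_left _ _
  have hδk : ∀ k, δ k ≤ 1/(k+1) := fun k => min_le_right _ _
  choose N hN1 y hy0 hyN hymem hystep using
    fun k => hAi (x k) (hxA k) (x (k+1)) (hxA (k+1)) (δ k) (hδpos k)
  choose M hM1 z hz0 hzN hzmem hzstep using
    fun k => hAi (x (k+1)) (hxA (k+1)) (x k) (hxA k) (δ k) (hδpos k)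
  set r : ℕ → ℕ → X := fun k i => z k (M k - i) with hr
  have hlinkY : ∀ k, y k (N k) = y (k+1) 0 := fun k => by rw [hyN k, hy0 (k+1)]
  have hlinkR : ∀ k, r k (M k) = r (k+1) 0 := by
    intro k
    simp only [hr]
    rw [Nat.sub_self, Nat.sub_zero, hz0 k, hzN (k+1)]
  set F : ℕ → X := fun n => y (chainSt N n).1 (chainSt N n).2 with hF
  set B : ℕ → X := fun n => r (chainSt M n).1 (chainSt M n).2 with hB
  set a : ℤ → X := fun i => if 0 ≤ i then F i.toNat else B (-i).toNat with ha
  have hFS : ∀ k, F (chainS N k) = x k := by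
    intro k
    simp only [hF]
    rw [chainSt_chainS N hN1 k]
    exact hy0 k
  have hBS : ∀ k, B (chainS M k) = x k := by
    intro k
    simp only [hB, hr]
    rw [chainSt_chainS M hM1 k]
    simp only [Nat.sub_zero]
    exact hzN k
  have hF0B0 : F 0 = B 0 := by
    have h1 := hFS 0
    have h2 := hBS 0
    simp only [chainS] at h1 h2
    rw [h1, h2]
  have hFA : ∀ n, F n ∈ A := fun n =>
    hymem _ _ (le_of_lt (chainSt_snd_lt N hN1 n))
  have hBA : ∀ n, B n ∈ A := fun n => hzmem _ _ (Nat.sub_le _ _)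
  have hFstep : ∀ n, dist (f (F n)) (F (n+1)) < δ (chainSt N n).1 := by
    intro n
    have h3 := chainSt_step_val y N hN1 hlinkY n
    simp only [hF]
    rw [h3]
    exact hystep _ _ (chainSt_snd_lt N hN1 n)
  have hBstep : ∀ n, dist (f (B (n+1))) (B n) < δ (chainSt M n).1 := by
    intro n
    have hlt := chainSt_snd_lt M hM1 n
    have h3 := chainSt_step_val r M hM1 hlinkR n
    have h4 : B (n+1) = r (chainSt M n).1 ((chainSt M n).2 + 1) := by
      simp only [hB]; exact h3
    have h5 : B n = z (chainSt M n).1 (M (chainSt M n).1 - (chainSt M n).2) := by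
      simp only [hB, hr]
    have h6 : r (chainSt M n).1 ((chainSt M n).2 + 1)
        = z (chainSt M n).1 (M (chainSt M n).1 - ((chainSt M n).2 + 1)) := by
      simp only [hr]
    rw [h4, h5, h6]
    rw [show M (chainSt M n).1 - (chainSt M n).2
        = (M (chainSt M n).1 - ((chainSt M n).2 + 1)) + 1 from by omega]
    exact hzstep _ _ (by omega)
  have haF : ∀ i : ℤ, 0 ≤ i → a i = F i.toNat := by
    intro i hi; simp only [ha]; rw [if_pos hi]
  have haB : ∀ i : ℤ, i < 0 → a i = B (-i).toNat := by
    intro i hi; simp only [ha]; rw [if_neg (not_le.mpr hi)]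
  have haB' : ∀ i : ℤ, i ≤ 0 → a i = B (-i).toNat := by
    intro i hi
    rcases lt_or_eq_of_le hi with h | h
    · exact haB i h
    · rw [h, haF 0 le_rfl]
      simpa using hF0B0
  have hstepPos : ∀ i : ℤ, 0 ≤ i →
      dist (f (a i)) (a (i+1)) < δ (chainSt N i.toNat).1 := by
    intro i hi
    rw [haF i hi, haF (i+1) (by omega), show (i+1).toNat = i.toNat + 1 from by omega]
    exact hFstep i.toNat
  have hstepNeg : ∀ i : ℤ, i < 0 →
      dist (f (a i)) (a (i+1)) < δ (chainSt M (-(i+1)).toNat).1 := by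
    intro i hi
    rw [haB i hi, haB' (i+1) (by omega), show (-i).toNat = (-(i+1)).toNat + 1 from by omega]
    exact hBstep (-(i+1)).toNat
  have hmain : ∀ i : ℤ, dist (f (a i)) (a (i+1)) < ε := by
    intro i
    rcases le_or_gt 0 i with hi | hi
    · exact lt_of_lt_of_le (hstepPos i hi) (hδε _)
    · exact lt_of_lt_of_le (hstepNeg i hi) (hδε _)
  have hmem : ∀ i : ℤ, a i ∈ A := by
    intro i
    rcases le_or_gt 0 i with hi | hi
    · rw [haF i hi]; exact hFA _
    · rw [haB i hi]; exact hBA _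
  have hδsmall : ∀ (K k : ℕ), K ≤ k → δ k ≤ 1/(K+1) := by
    intro K k hK
    refine le_trans (hδk k) ?_
    apply one_div_le_one_div_of_le (by positivity)
    have : (K:ℝ) ≤ k := Nat.cast_le.mpr hK
    linarith
  have htop : Tendsto (fun i : ℤ => dist (f (a i)) (a (i + 1))) atTop (nhds 0) := by
    rw [Metric.tendsto_nhds]
    intro η hη
    obtain ⟨K, hK⟩ := exists_nat_one_div_lt hη
    rw [eventually_atTop]
    refine ⟨(chainS N K : ℤ), fun i hi => ?_⟩
    have hi0 : (0:ℤ) ≤ i := le_trans (Int.natCast_nonneg _) hi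
    have hn : chainS N K ≤ i.toNat := by omega
    have hk1 : K ≤ (chainSt N i.toNat).1 := by
      have h1 : (chainSt N (chainS N K)).1 ≤ (chainSt N i.toNat).1 := chainSt_fst_mono N hn
      rwa [chainSt_chainS N hN1 K] at h1
    rw [Real.dist_eq, sub_zero, abs_of_nonneg dist_nonneg]
    calc dist (f (a i)) (a (i+1)) < δ (chainSt N i.toNat).1 := hstepPos i hi0
      _ ≤ 1/(K+1) := hδsmall K _ hk1
      _ < η := hK
  have hbot : Tendsto (fun i : ℤ => dist (f (a i)) (a (i + 1))) atBot (nhds 0) := by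
    rw [Metric.tendsto_nhds]
    intro η hη
    obtain ⟨K, hK⟩ := exists_nat_one_div_lt hη
    rw [eventually_atBot]
    refine ⟨-(chainS M K : ℤ) - 1, fun i hi => ?_⟩
    have hc0 : (0:ℤ) ≤ (chainS M K : ℤ) := Int.natCast_nonneg _
    have hi0 : i < 0 := by omega
    have hn : chainS M K ≤ (-(i+1)).toNat := by omega
    have hk1 : K ≤ (chainSt M (-(i+1)).toNat).1 := by
      have h1 : (chainSt M (chainS M K)).1 ≤ (chainSt M (-(i+1)).toNat).1 :=
        chainSt_fst_mono M hn
      rwa [chainSt_chainS M hM1 K] at h1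
    rw [Real.dist_eq, sub_zero, abs_of_nonneg dist_nonneg]
    calc dist (f (a i)) (a (i+1)) < δ (chainSt M (-(i+1)).toNat).1 := hstepNeg i hi0
      _ ≤ 1/(K+1) := hδsmall K _ hk1
      _ < η := hK
  have hωeq : omegaZ a = A := by
    apply Subset.antisymm
    · intro p hp
      rw [omegaZ, Set.mem_iInter] at hp
      have h1 := hp 0
      have h2 : a '' {n : ℤ | ((0:ℕ):ℤ) < n} ⊆ A := by
        rintro _ ⟨n, -, rfl⟩; exact hmem n
      have h3 := closure_mono h2 h1
      rwa [hAc.closure_eq] at h3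
    · intro p hp
      rw [omegaZ, Set.mem_iInter]
      intro M0
      have hsub : Set.range dd ⊆ a '' {n : ℤ | (M0:ℤ) < n} := by
        rintro _ ⟨j, rfl⟩
        set k := Nat.pair j (M0+1) with hk
        have hkge : M0 + 1 ≤ k := Nat.right_le_pair _ _
        have hSge := chainS_ge N hN1 k
        refine ⟨(chainS N k : ℤ), ?_, ?_⟩
        · show (M0:ℤ) < (chainS N k : ℤ)
          exact_mod_cast (by omega : M0 < chainS N k)
        · rw [haF _ (Int.natCast_nonneg _), Int.toNat_natCast, hFS k]
          simp only [hx]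
          rw [hk, Nat.unpair_pair]
      exact closure_mono hsub (hdense p hp)
  have hαeq : alphaZ a = A := by
    apply Subset.antisymm
    · intro p hp
      rw [alphaZ, Set.mem_iInter] at hp
      have h1 := hp 0
      have h2 : a '' {n : ℤ | n < -((0:ℕ):ℤ)} ⊆ A := by
        rintro _ ⟨n, -, rfl⟩; exact hmem n
      have h3 := closure_mono h2 h1
      rwa [hAc.closure_eq] at h3
    · intro p hp
      rw [alphaZ, Set.mem_iInter]
      intro M0
      have hsub : Set.range dd ⊆ a '' {n : ℤ | n < -(M0:ℤ)} := by
        rintro _ ⟨j, rfl⟩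
        set k := Nat.pair j (M0+1) with hk
        have hkge : M0 + 1 ≤ k := Nat.right_le_pair _ _
        have hSge := chainS_ge M hM1 k
        refine ⟨-(chainS M k : ℤ), ?_, ?_⟩
        · show -(chainS M k : ℤ) < -(M0:ℤ)
          have : (M0:ℤ) < (chainS M k : ℤ) := by exact_mod_cast (by omega : M0 < chainS M k)
          omega
        · rw [haB' _ (by omega : -(chainS M k : ℤ) ≤ 0)]
          rw [show (-(-(chainS M k : ℤ))).toNat = chainS M k from by omega, hBS k]
          simp only [hx]
          rw [hk, Nat.unpair_pair]
      exact closure_mono hsub (hdense p hp)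
  exact ⟨a, hmem, hmain, ⟨htop, hbot⟩, hαeq, hωeq⟩
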